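/- Let P and Q be p-strongly equivalent LPMLN programs and U = lit(P ∪ Q). For any two consistent subsets X and Y of U, there exists a flattening extension E^k(P, U) such that both X and Y are probabilistic stable models of E^k(P, U). -/

import Mathlib

open scoped Classical

noncomputable section

namespace LPMLN

/-- A ground literal: an atom (numbered by `ℕ`) or its classical negation. -/
inductive Lit where
  | pos : ℕ → Lit
  | neg : ℕ → Lit
deriving DecidableEq

/-- The complementary literal. -/
def Lit.compl : Lit → Lit
  | .pos a => .neg a
  | .neg a => .pos a

/-- A finite set of literals is consistent if it contains no complementary pair. -/
def Consistent (I : Finset Lit) : Prop := ∀ l ∈ I, l.compl ∉ I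

/-- An ASP rule, given by its head, positive body and negative body. -/
structure Rule where
  head : Finset Lit
  pos : Finset Lit
  neg : Finset Lit
deriving DecidableEq

/-- The literals occurring in a rule. -/
def Rule.lits (r : Rule) : Finset Lit := r.head ∪ r.pos ∪ r.neg

/-- Satisfaction of a rule by a set of literals. -/
def Sat (I : Finset Lit) (r : Rule) : Prop :=
  r.pos ⊆ I → r.neg ∩ I = ∅ → (r.head ∩ I).Nonempty

/-- Satisfaction of an ASP program. -/
def SatProg (I : Finset Lit) (prog : Finset Rule) : Prop := ∀ r ∈ prog, Sat I r

/-- The GL-reduct of an ASP program w.r.t. an interpretation. -/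
def glReduct (prog : Finset Rule) (I : Finset Lit) : Finset Rule :=
  (prog.filter fun r => r.neg ∩ I = ∅).image fun r => ⟨r.head, r.pos, ∅⟩

/-- `I` is a stable model of the ASP program `prog`: `I` is a consistent set of
literals satisfying the GL-reduct, no proper subset of which satisfies the GL-reduct. -/
def AspStable (prog : Finset Rule) (I : Finset Lit) : Prop :=
  Consistent I ∧ SatProg I (glReduct prog I) ∧ ∀ J ⊂ I, ¬ SatProg J (glReduct prog I)

/-- A weight: a real number (soft rule) or the symbol `α` (hard rule). -/
inductive Weight where
  | soft : ℝ → Weight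
  | hard : Weight

/-- The real value of a soft weight (hard weights get the dummy value 0). -/
def Weight.val : Weight → ℝ
  | .soft w => w
  | .hard => 0

/-- A weighted rule `w : r`. -/
structure WRule where
  w : Weight
  r : Rule

/-- An LPMLN program: a finite set of weighted rules. -/
abbrev Program := Finset WRule

/-- The LPMLN reduct `P_I`: the rules of `P` satisfied by `I`. -/
def reduct (P : Program) (I : Finset Lit) : Program := P.filter fun wr => Sat I wr.r

/-- The unweighted ASP counterpart of an LPMLN program. -/
def unweighted (P : Program) : Finset Rule := P.image fun wr => wr.r

/-- `I` is a stable model of the LPMLN program `P`: `I` is a stable model of the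
unweighted ASP counterpart of the LPMLN reduct `P_I`. -/
def Stable (P : Program) (I : Finset Lit) : Prop :=
  AspStable (unweighted (reduct P I)) I

/-- The literals occurring in an LPMLN program. -/
def litset (P : Program) : Finset Lit := P.biUnion fun wr => wr.r.lits

/-- `(X, Y)` is an SE-interpretation: a pair of interpretations with `X ⊆ Y`. -/
def SEInterp (X Y : Finset Lit) : Prop := Consistent X ∧ Consistent Y ∧ X ⊆ Y

/-- `(X, Y)` is an SE-model of the LPMLN program `P`: an SE-interpretation such that
`X` satisfies the GL-reduct (w.r.t. `Y`) of the unweighted version of `P_Y`. -/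
def SEModel (P : Program) (X Y : Finset Lit) : Prop :=
  SEInterp X Y ∧ SatProg X (glReduct (unweighted (reduct P Y)) Y)

/-- The number of hard rules of `P` satisfied by `I`. -/
def hardCount (P : Program) (I : Finset Lit) : ℕ :=
  ((reduct P I).filter fun wr => wr.w = Weight.hard).card

/-- The sum of the weights of the soft rules of `P` satisfied by `I`. -/
def softWeight (P : Program) (I : Finset Lit) : ℝ :=
  ∑ wr ∈ ((reduct P I).filter fun wr => wr.w ≠ Weight.hard), wr.w.val

/-- The weight degree `W(P, I) = exp(Σ_{w:r ∈ P_I} w)`, viewed as the real-valued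
function `A ↦ exp(c' + k'·A)` of the value `A` given to the symbol `α`, where `k'` is
the number of hard rules of `P` satisfied by `I` and `c'` the sum of the weights of the
soft rules of `P` satisfied by `I`. -/
def wdeg (P : Program) (I : Finset Lit) (A : ℝ) : ℝ :=
  Real.exp (softWeight P I + A * hardCount P I)

/-- The (finite) set of stable models of `P` (every stable model of `P` is a subset of
`litset P`). -/
def SMset (P : Program) : Finset (Finset Lit) :=
  (litset P).powerset.filter fun I => Stable P I

/-- The probability degree `Pr(P, I)`: the limit, as `α → ∞`, of
`W(P, I) / Σ_{I' ∈ SM(P)} W(P, I')` if `I` is a stable model of `P`, and `0` otherwise. -/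
def PrDeg (P : Program) (I : Finset Lit) : ℝ :=
  if Stable P I then
    Filter.limUnder Filter.atTop fun A => wdeg P I A / ∑ I' ∈ SMset P, wdeg P I' A
  else 0

/-- `I` is a probabilistic stable model of `P`: a stable model of `P` satisfying the
maximum number of hard rules of `P` (equivalently, with nonzero probability degree). -/
def PStable (P : Program) (I : Finset Lit) : Prop :=
  Stable P I ∧ ∀ J, Stable P J → hardCount P J ≤ hardCount P I

/-- Semi-strong equivalence: the extensions by any LPMLN program have the same
stable models. -/
def SemiStrongEq (P Q : Program) : Prop :=
  ∀ R : Program, ∀ I, Stable (P ∪ R) I ↔ Stable (Q ∪ R) I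

/-- p-ordinary equivalence: same stable models and same probability degrees. -/
def POrdEq (P Q : Program) : Prop :=
  (∀ I, Stable P I ↔ Stable Q I) ∧ ∀ I, Stable P I → PrDeg P I = PrDeg Q I

/-- p-strong equivalence: p-ordinary equivalence under every extension. -/
def PStrongEq (P Q : Program) : Prop := ∀ R : Program, POrdEq (P ∪ R) (Q ∪ R)

/-- Comparison of the symbolic weight degrees of two interpretations w.r.t. `P`:
`exp(c + k·α) ≤ exp(c' + k'·α)` iff `k < k'`, or `k = k'` and `c ≤ c'`. -/
def WLe (P : Program) (I J : Finset Lit) : Prop :=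
  hardCount P I < hardCount P J ∨
    (hardCount P I = hardCount P J ∧ softWeight P I ≤ softWeight P J)

/-- q-strong equivalence: same stable models under every extension, with
order-preserving weight degrees. -/
def QStrongEq (P Q : Program) : Prop :=
  ∀ R : Program,
    (∀ I, Stable (P ∪ R) I ↔ Stable (Q ∪ R) I) ∧
    ∀ X Y, Stable (P ∪ R) X → Stable (P ∪ R) Y → (WLe (P ∪ R) X Y ↔ WLe (Q ∪ R) X Y)

/-- A soft stable model of `P`: a stable model of `P` satisfying all hard rules of `P`. -/
def SoftStable (P : Program) (I : Finset Lit) : Prop :=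
  Stable P I ∧ ∀ wr ∈ P, wr.w = Weight.hard → Sat I wr.r

/-- A soft SE-model of `P`: an SE-model `(X, Y)` of `P` such that `Y` satisfies all
hard rules of `P`. -/
def SoftSEModel (P : Program) (X Y : Finset Lit) : Prop :=
  SEModel P X Y ∧ ∀ wr ∈ P, wr.w = Weight.hard → Sat Y wr.r

/-- The (finite) set of soft stable models of `P`. -/
def SSMset (P : Program) : Finset (Finset Lit) :=
  (litset P).powerset.filter fun I => SoftStable P I

/-- The probability degree under the soft stable model semantics:
`Pr_s(P, X) = W_s(P, X) / Σ_{X' ∈ SSM(P)} W_s(P, X')`, where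
`W_s(P, X) = exp(Σ_{w:r ∈ P^s, X ⊨ r} w)`. -/
def PrS (P : Program) (X : Finset Lit) : ℝ :=
  Real.exp (softWeight P X) / ∑ X' ∈ SSMset P, Real.exp (softWeight P X')

/-- sp-strong equivalence: p-strong equivalence under the soft stable model
semantics. -/
def SPStrongEq (P Q : Program) : Prop :=
  ∀ R : Program,
    (∀ I, SoftStable (P ∪ R) I ↔ SoftStable (Q ∪ R) I) ∧
    ∀ X, SoftStable (P ∪ R) X → PrS (P ∪ R) X = PrS (Q ∪ R) X

/-- `(X, Y)` is a UE-model of `P`: an SE-model with `X = Y`, or with `X ⊊ Y` such that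
no `X'` strictly between `X` and `Y` gives an SE-model `(X', Y)`. -/
def UEModel (P : Program) (X Y : Finset Lit) : Prop :=
  SEModel P X Y ∧
    (X = Y ∨ (X ⊂ Y ∧ ∀ X', X ⊂ X' → X' ⊂ Y → ¬ SEModel P X' Y))

/-- A program consisting of weighted facts only (rules with empty bodies). -/
def IsFactProg (R : Program) : Prop := ∀ wr ∈ R, wr.r.pos = ∅ ∧ wr.r.neg = ∅

/-- p-uniform equivalence: p-ordinary equivalence under every extension by a set of
weighted facts. -/
def PUniformEq (P Q : Program) : Prop :=
  ∀ R : Program, IsFactProg R → POrdEq (P ∪ R) (Q ∪ R)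

/-- The flattening rules `R(X, Y, a)`: the two hard rules
`α : ← X, not Y, a` and `α : a ← X, not Y`. -/
def flatten (X Y : Finset Lit) (a : ℕ) : Program :=
  {⟨Weight.hard, ⟨∅, X ∪ {Lit.pos a}, Y⟩⟩, ⟨Weight.hard, ⟨{Lit.pos a}, X, Y⟩⟩}

/-- The hard fact `α : l`. -/
def factOf (l : Lit) : WRule := ⟨Weight.hard, ⟨{l}, ∅, ∅⟩⟩

/-- The base flattening extension `E⁰(P, U) = P ∪ {α : a | a ∈ U}`. -/
def E0 (P : Program) (U : Finset Lit) : Program := P ∪ U.image factOf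

/-- `IsFlatExt P U k E` holds iff `E` is a flattening extension `E^k(P, U)`:
`E⁰(P, U) = P ∪ {α : a | a ∈ U}` and `E^{i+1}(P, U) = E^i(P, U) ∪ R(X ∩ U, U − X, c)`
where `X` is a probabilistic stable model of `E^i(P, U)` and `c` is a fresh atom. -/
inductive IsFlatExt (P : Program) (U : Finset Lit) : ℕ → Program → Prop
  | zero : IsFlatExt P U 0 (E0 P U)
  | succ {i : ℕ} {E : Program} {X : Finset Lit} {c : ℕ} :
      IsFlatExt P U i E → PStable E X →
      Lit.pos c ∉ litset E → Lit.neg c ∉ litset E →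
      IsFlatExt P U (i + 1) (E ∪ flatten (X ∩ U) (U \ X) c)

/-! ### Auxiliary material for the proof -/

section Aux

/-- The atom index of a literal. -/
def atomIdx : Lit → ℕ
  | .pos a => a
  | .neg a => a

lemma lits_subset_litset {P : Program} {wr : WRule} (h : wr ∈ P) :
    wr.r.lits ⊆ litset P :=
  Finset.subset_biUnion_of_mem (fun wr => wr.r.lits) h

lemma head_subset_lits (r : Rule) : r.head ⊆ r.lits := by
  intro l hl; simp [Rule.lits, hl]

lemma pos_subset_lits (r : Rule) : r.pos ⊆ r.lits := by
  intro l hl; simp [Rule.lits, hl]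

lemma neg_subset_lits (r : Rule) : r.neg ⊆ r.lits := by
  intro l hl; simp [Rule.lits, hl]

lemma sat_inter_iff {r : Rule} {U J : Finset Lit} (h : r.lits ⊆ U) :
    Sat (J ∩ U) r ↔ Sat J r := by
  have hh : r.head ⊆ U := (head_subset_lits r).trans h
  have hp : r.pos ⊆ U := (pos_subset_lits r).trans h
  have hn : r.neg ⊆ U := (neg_subset_lits r).trans h
  have e1 : (r.pos ⊆ J ∩ U) ↔ r.pos ⊆ J :=
    ⟨fun h' => h'.trans Finset.inter_subset_left, fun h' => Finset.subset_inter h' hp⟩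
  have e2 : r.neg ∩ (J ∩ U) = r.neg ∩ J := by
    ext l; simp only [Finset.mem_inter]; exact ⟨fun ⟨a, b, _⟩ => ⟨a, b⟩,
      fun ⟨a, b⟩ => ⟨a, b, hn a⟩⟩
  have e3 : r.head ∩ (J ∩ U) = r.head ∩ J := by
    ext l; simp only [Finset.mem_inter]; exact ⟨fun ⟨a, b, _⟩ => ⟨a, b⟩,
      fun ⟨a, b⟩ => ⟨a, b, hh a⟩⟩
  unfold Sat
  rw [e1, e2, e3]

lemma satProg_glReduct (E : Program) (I : Finset Lit) :
    SatProg I (glReduct (unweighted (reduct E I)) I) := by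
  intro r hr
  simp only [glReduct, Finset.mem_image, Finset.mem_filter] at hr
  obtain ⟨r0, ⟨hr0, hneg⟩, rfl⟩ := hr
  simp only [unweighted, reduct, Finset.mem_image, Finset.mem_filter] at hr0
  obtain ⟨wr, ⟨_, hsat⟩, rfl⟩ := hr0
  intro hpos _
  exact hsat hpos hneg

lemma consistent_inter {J U : Finset Lit} (h : Consistent J) : Consistent (J ∩ U) := by
  intro l hl hl'
  exact h l (Finset.mem_inter.mp hl).1 (Finset.mem_inter.mp hl').1

lemma mem_E0_of_mem {P : Program} {U : Finset Lit} {l : Lit} (h : l ∈ U) :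
    factOf l ∈ E0 P U := by
  simp only [E0, Finset.mem_union, Finset.mem_image]
  exact Or.inr ⟨l, h, rfl⟩

lemma stable_of_facts {E : Program} {I : Finset Lit}
    (hfacts : ∀ l ∈ I, factOf l ∈ E) (hc : Consistent I) :
    Stable E I := by
  refine ⟨hc, satProg_glReduct E I, ?_⟩
  intro J hJ hSat
  obtain ⟨l, hlI, hlJ⟩ := Finset.exists_of_ssubset hJ
  have hsatI : Sat I (factOf l).r := fun _ _ => ⟨l, by simp [factOf, hlI]⟩
  have hmem : (factOf l).r ∈ unweighted (reduct E I) := by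
    simp only [unweighted, reduct, Finset.mem_image, Finset.mem_filter]
    exact ⟨factOf l, ⟨hfacts l hlI, hsatI⟩, rfl⟩
  have hred : (⟨{l}, ∅, ∅⟩ : Rule) ∈ glReduct (unweighted (reduct E I)) I := by
    simp only [glReduct, Finset.mem_image, Finset.mem_filter]
    exact ⟨(factOf l).r, ⟨hmem, by simp [factOf]⟩, by simp [factOf]⟩
  have := hSat _ hred (by simp) (by simp)
  obtain ⟨x, hx⟩ := this
  simp only [Finset.mem_inter, Finset.mem_singleton] at hx
  exact hlJ (hx.1 ▸ hx.2)

lemma reduct_union (P R : Program) (I : Finset Lit) :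
    reduct (P ∪ R) I = reduct P I ∪ reduct R I := Finset.filter_union _ _ _

lemma hardCount_union {P R : Program} (h : Disjoint P R) (I : Finset Lit) :
    hardCount (P ∪ R) I = hardCount P I + hardCount R I := by
  unfold hardCount
  rw [reduct_union, Finset.filter_union, Finset.card_union_of_disjoint]
  exact h.mono ((Finset.filter_subset _ _).trans (Finset.filter_subset _ _))
    ((Finset.filter_subset _ _).trans (Finset.filter_subset _ _))

lemma sat_constraint_iff {A B I : Finset Lit} :
    Sat I ⟨∅, A, B⟩ ↔ ¬(A ⊆ I ∧ B ∩ I = ∅) := by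
  unfold Sat
  simp only [Finset.empty_inter, Finset.not_nonempty_empty]
  tauto

lemma sat_rule2_iff {A B I : Finset Lit} {c : ℕ} :
    Sat I ⟨{Lit.pos c}, A, B⟩ ↔ (A ⊆ I → B ∩ I = ∅ → Lit.pos c ∈ I) := by
  unfold Sat
  have : ({Lit.pos c} ∩ I).Nonempty ↔ Lit.pos c ∈ I := by
    constructor
    · rintro ⟨x, hx⟩
      simp only [Finset.mem_inter, Finset.mem_singleton] at hx
      exact hx.1 ▸ hx.2
    · intro h
      exact ⟨Lit.pos c, Finset.mem_inter.mpr ⟨Finset.mem_singleton_self _, h⟩⟩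
  rw [this]

lemma flatten_ne {A B : Finset Lit} {c : ℕ} :
    (⟨Weight.hard, ⟨∅, A ∪ {Lit.pos c}, B⟩⟩ : WRule) ≠ ⟨Weight.hard, ⟨{Lit.pos c}, A, B⟩⟩ := by
  intro h
  have : (∅ : Finset Lit) = {Lit.pos c} := congrArg (fun wr => wr.r.head) h
  exact (Finset.singleton_ne_empty _) this.symm

lemma hardCount_flatten (A B : Finset Lit) (c : ℕ) (I : Finset Lit) :
    hardCount (flatten A B c) I =
      (if Sat I ⟨∅, A ∪ {Lit.pos c}, B⟩ then 1 else 0) +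
      (if Sat I ⟨{Lit.pos c}, A, B⟩ then 1 else 0) := by
  unfold flatten hardCount reduct
  by_cases s1 : Sat I (⟨∅, A ∪ {Lit.pos c}, B⟩ : Rule) <;>
    by_cases s2 : Sat I (⟨{Lit.pos c}, A, B⟩ : Rule) <;>
      simp [Finset.filter_insert, Finset.filter_singleton, s1, s2,
        Finset.card_insert_of_notMem, Finset.card_pair, flatten_ne, -Finset.union_singleton]

lemma flatten_le {A B U J : Finset Lit} {c : ℕ} (hA : A ⊆ U) (hB : B ⊆ U)
    (hcU : Lit.pos c ∉ U) :
    hardCount (flatten A B c) J ≤ hardCount (flatten A B c) (J ∩ U) := by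
  rw [hardCount_flatten, hardCount_flatten]
  have hcJU : Lit.pos c ∉ J ∩ U := fun h => hcU (Finset.mem_inter.mp h).2
  have r1JU : Sat (J ∩ U) ⟨∅, A ∪ {Lit.pos c}, B⟩ := by
    rw [sat_constraint_iff]
    rintro ⟨hsub, -⟩
    exact hcJU (hsub (by simp))
  by_cases hb : A ⊆ J ∧ B ∩ J = ∅
  · -- pattern matches: RHS = 1, LHS ≤ 1
    have hb2 : ¬ Sat (J ∩ U) (⟨{Lit.pos c}, A, B⟩ : Rule) := by
      rw [sat_rule2_iff]
      intro h
      exact hcJU (h (Finset.subset_inter hb.1 hA)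
        (by rw [show B ∩ (J ∩ U) = B ∩ J by
              ext l; simp only [Finset.mem_inter]
              exact ⟨fun ⟨a, b, _⟩ => ⟨a, b⟩, fun ⟨a, b⟩ => ⟨a, b, hB a⟩⟩, hb.2]))
    by_cases hc : Lit.pos c ∈ J
    · have hsub : A ∪ {Lit.pos c} ⊆ J := Finset.union_subset hb.1 (by simp [hc])
      have r1 : ¬ Sat J (⟨∅, A ∪ {Lit.pos c}, B⟩ : Rule) := by
        rw [sat_constraint_iff]
        exact not_not_intro ⟨hsub, hb.2⟩
      rw [if_pos r1JU, if_neg hb2, if_neg r1]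
      split_ifs <;> omega
    · have r2 : ¬ Sat J (⟨{Lit.pos c}, A, B⟩ : Rule) := by
        rw [sat_rule2_iff]
        intro h
        exact hc (h hb.1 hb.2)
      rw [if_pos r1JU, if_neg hb2, if_neg r2]
      split_ifs <;> omega
  · -- RHS = 2
    have hb2 : Sat (J ∩ U) (⟨{Lit.pos c}, A, B⟩ : Rule) := by
      rw [sat_rule2_iff]
      intro h1 h2
      exfalso
      apply hb
      constructor
      · exact h1.trans Finset.inter_subset_left
      · rw [show B ∩ (J ∩ U) = B ∩ J from by
          ext l; simp only [Finset.mem_inter]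
          exact ⟨fun ⟨a, b, _⟩ => ⟨a, b⟩, fun ⟨a, b⟩ => ⟨a, b, hB a⟩⟩] at h2
        exact h2
    rw [if_pos r1JU, if_pos hb2]
    split_ifs <;> omega

lemma flatten_canon {Z U I : Finset Lit} {c : ℕ} (hZ : Z ⊆ U) (hI : I ⊆ U)
    (hcU : Lit.pos c ∉ U) :
    hardCount (flatten Z (U \ Z) c) I = if I = Z then 1 else 2 := by
  rw [hardCount_flatten]
  have hcI : Lit.pos c ∉ I := fun h => hcU (hI h)
  have r1 : Sat I ⟨∅, Z ∪ {Lit.pos c}, U \ Z⟩ := by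
    rw [sat_constraint_iff]
    rintro ⟨hsub, -⟩
    exact hcI (hsub (by simp))
  have hbeta : (Z ⊆ I ∧ (U \ Z) ∩ I = ∅) ↔ I = Z := by
    constructor
    · rintro ⟨h1, h2⟩
      apply Finset.Subset.antisymm _ h1
      intro x hx
      by_contra hxZ
      have : x ∈ (U \ Z) ∩ I := Finset.mem_inter.mpr ⟨Finset.mem_sdiff.mpr ⟨hI hx, hxZ⟩, hx⟩
      rw [h2] at this
      exact absurd this (Finset.notMem_empty x)
    · rintro rfl
      exact ⟨Finset.Subset.refl _, by rw [Finset.sdiff_inter_self]⟩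
  by_cases hIZ : I = Z
  · have r2 : ¬ Sat I (⟨{Lit.pos c}, Z, U \ Z⟩ : Rule) := by
      rw [sat_rule2_iff]
      intro h
      exact hcI (h (hbeta.mpr hIZ).1 (hbeta.mpr hIZ).2)
    rw [if_pos r1, if_neg r2, if_pos hIZ]
  · have r2 : Sat I (⟨{Lit.pos c}, Z, U \ Z⟩ : Rule) := by
      rw [sat_rule2_iff]
      intro h1 h2
      exact absurd (hbeta.mp ⟨h1, h2⟩) hIZ
    rw [if_pos r1, if_pos r2, if_neg hIZ]

lemma disjoint_flatten {E : Program} {A B : Finset Lit} {c : ℕ}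
    (hc : Lit.pos c ∉ litset E) :
    Disjoint E (flatten A B c) := by
  rw [Finset.disjoint_right]
  intro wr hwrF hwrE
  apply hc
  apply lits_subset_litset hwrE
  simp only [flatten, Finset.mem_insert, Finset.mem_singleton] at hwrF
  rcases hwrF with rfl | rfl <;> simp [Rule.lits]

lemma flat_inv {P : Program} {U : Finset Lit} (hPU : litset P ⊆ U) :
    ∀ {i : ℕ} {E : Program}, IsFlatExt P U i E →
      (E0 P U ⊆ E) ∧ (U ⊆ litset E) ∧
      (∀ J, hardCount E J ≤ hardCount E (J ∩ U)) := by
  intro i E h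
  induction h with
  | zero =>
    refine ⟨Finset.Subset.refl _, ?_, ?_⟩
    · intro l hl
      have : factOf l ∈ E0 P U := mem_E0_of_mem hl
      apply lits_subset_litset this
      simp [factOf, Rule.lits]
    · intro J
      have hlits : ∀ wr ∈ E0 P U, wr.r.lits ⊆ U := by
        intro wr hwr
        simp only [E0, Finset.mem_union, Finset.mem_image] at hwr
        rcases hwr with hwr | ⟨l, hl, rfl⟩
        · exact (lits_subset_litset hwr).trans hPU
        · simp only [factOf, Rule.lits]
          intro x hx
          simp only [Finset.union_empty, Finset.mem_union, Finset.mem_singleton] at hx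
          simpa [hx] using hl
      have : reduct (E0 P U) J = reduct (E0 P U) (J ∩ U) := by
        apply Finset.filter_congr
        intro wr hwr
        exact (sat_inter_iff (hlits wr hwr)).symm
      unfold hardCount
      rw [this]
  | @succ i E Z c hE hZ hc1 hc2 ih =>
    obtain ⟨ih0, ihU, ihle⟩ := ih
    have hdisj : Disjoint E (flatten (Z ∩ U) (U \ Z) c) := disjoint_flatten hc1
    refine ⟨ih0.trans Finset.subset_union_left, ?_, ?_⟩
    · exact ihU.trans (Finset.biUnion_subset_biUnion_of_subset_left _ Finset.subset_union_left)
    · intro J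
      rw [hardCount_union hdisj, hardCount_union hdisj]
      have hcU : Lit.pos c ∉ U := fun h => hc1 (ihU h)
      exact Nat.add_le_add (ihle J)
        (flatten_le Finset.inter_subset_right Finset.sdiff_subset hcU)

lemma pstable_of_max {P : Program} {U : Finset Lit} {i : ℕ} {E : Program}
    (hPU : litset P ⊆ U) (hE : IsFlatExt P U i E) {Z : Finset Lit}
    (hZU : Z ⊆ U) (hZc : Consistent Z)
    (hmax : ∀ I, I ⊆ U → Consistent I → hardCount E I ≤ hardCount E Z) :
    PStable E Z := by
  obtain ⟨hE0, hUlit, hle⟩ := flat_inv hPU hE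
  constructor
  · exact stable_of_facts (fun l hl => hE0 (mem_E0_of_mem (hZU hl))) hZc
  · intro J hJ
    have hJc : Consistent J := hJ.1
    exact (hle J).trans (hmax (J ∩ U) Finset.inter_subset_right (consistent_inter hJc))

lemma fresh_atom (E : Program) :
    ∃ c : ℕ, Lit.pos c ∉ litset E ∧ Lit.neg c ∉ litset E := by
  refine ⟨(litset E).sup atomIdx + 1, fun h => ?_, fun h => ?_⟩
  · have h2 : atomIdx (Lit.pos ((litset E).sup atomIdx + 1)) ≤ (litset E).sup atomIdx :=
      Finset.le_sup h
    simp only [atomIdx] at h2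
    omega
  · have h2 : atomIdx (Lit.neg ((litset E).sup atomIdx + 1)) ≤ (litset E).sup atomIdx :=
      Finset.le_sup h
    simp only [atomIdx] at h2
    omega

lemma main_ind (P : Program) (U : Finset Lit) (hPU : litset P ⊆ U)
    (X Y : Finset Lit) (hXc : Consistent X) (hXU : X ⊆ U)
    (hYc : Consistent Y) (hYU : Y ⊆ U) (m : ℤ) :
    ∀ n : ℕ, ∀ i : ℕ, ∀ E : Program, IsFlatExt P U i E →
      (∑ I ∈ U.powerset.filter Consistent,
        ((hardCount E I : ℤ) - 2 * i - m).toNat) = n →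
      m ≤ (hardCount E X : ℤ) - 2 * i → m ≤ (hardCount E Y : ℤ) - 2 * i →
      ∃ k E', IsFlatExt P U k E' ∧ PStable E' X ∧ PStable E' Y := by
  intro n
  induction n using Nat.strong_induction_on with
  | _ n IH =>
  intro i E hE hPhi hmX hmY
  have hXC : X ∈ U.powerset.filter Consistent :=
    Finset.mem_filter.mpr ⟨Finset.mem_powerset.mpr hXU, hXc⟩
  have hYC : Y ∈ U.powerset.filter Consistent :=
    Finset.mem_filter.mpr ⟨Finset.mem_powerset.mpr hYU, hYc⟩
  have hCne : (U.powerset.filter Consistent).Nonempty := ⟨X, hXC⟩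
  obtain ⟨Z, hZC, hZmax⟩ :=
    Finset.exists_max_image (U.powerset.filter Consistent) (fun I => hardCount E I) hCne
  have hZU : Z ⊆ U := Finset.mem_powerset.mp (Finset.mem_filter.mp hZC).1
  have hZc : Consistent Z := (Finset.mem_filter.mp hZC).2
  have hmaxZ : ∀ I, I ⊆ U → Consistent I → hardCount E I ≤ hardCount E Z := by
    intro I hIU hIc
    exact hZmax I (Finset.mem_filter.mpr ⟨Finset.mem_powerset.mpr hIU, hIc⟩)
  by_cases hdone : hardCount E X = hardCount E Z ∧ hardCount E Y = hardCount E Z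
  · refine ⟨i, E, hE, ?_, ?_⟩
    · exact pstable_of_max hPU hE hXU hXc
        (fun I hIU hIc => hdone.1 ▸ hmaxZ I hIU hIc)
    · exact pstable_of_max hPU hE hYU hYc
        (fun I hIU hIc => hdone.2 ▸ hmaxZ I hIU hIc)
  · have hXZ : hardCount E X ≤ hardCount E Z := hZmax X hXC
    have hYZ : hardCount E Y ≤ hardCount E Z := hZmax Y hYC
    have hlt : m < (hardCount E Z : ℤ) - 2 * i := by
      by_contra h
      push_neg at h
      exact hdone ⟨by omega, by omega⟩
    have hZps : PStable E Z := pstable_of_max hPU hE hZU hZc hmaxZ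
    obtain ⟨c, hc1, hc2⟩ := fresh_atom E
    obtain ⟨hE0, hUlit, hle⟩ := flat_inv hPU hE
    have hcU : Lit.pos c ∉ U := fun h => hc1 (hUlit h)
    have hdisj : Disjoint E (flatten (Z ∩ U) (U \ Z) c) := disjoint_flatten hc1
    have hE' : IsFlatExt P U (i + 1) (E ∪ flatten (Z ∩ U) (U \ Z) c) :=
      hE.succ hZps hc1 hc2
    have hZiU : Z ∩ U = Z := Finset.inter_eq_left.mpr hZU
    have hcount : ∀ I, I ⊆ U → hardCount (E ∪ flatten (Z ∩ U) (U \ Z) c) I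
        = hardCount E I + (if I = Z then 1 else 2) := by
      intro I hIU
      rw [hardCount_union hdisj, hZiU, flatten_canon hZU hIU hcU]
    refine IH (∑ I ∈ U.powerset.filter Consistent,
        ((hardCount (E ∪ flatten (Z ∩ U) (U \ Z) c) I : ℤ) - 2 * (i + 1) - m).toNat)
      ?_ (i + 1) _ hE' rfl ?_ ?_
    · rw [← hPhi]
      apply Finset.sum_lt_sum
      · intro I hIC
        have hIU : I ⊆ U := Finset.mem_powerset.mp (Finset.mem_filter.mp hIC).1
        rw [hcount I hIU]
        split_ifs <;> push_cast <;> omega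
      · refine ⟨Z, hZC, ?_⟩
        rw [hcount Z hZU, if_pos rfl]
        push_cast
        omega
    · rw [hcount X hXU]
      split_ifs with h
      · rw [h]
        push_cast
        omega
      · push_cast
        omega
    · rw [hcount Y hYU]
      split_ifs with h
      · rw [h]
        push_cast
        omega
      · push_cast
        omega


end Aux

/-- Let `P` and `Q` be p-strongly equivalent LPMLN programs and
`U = lit(P ∪ Q)`. For any two consistent subsets `X` and `Y` of `U`, there exists a
flattening extension `E^k(P, U)` such that both `X` and `Y` are probabilistic stable
models of `E^k(P, U)`. -/
theorem flattening_extension_exists (P Q : Program) (hPQ : PStrongEq P Q)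
    (X Y : Finset Lit)
    (hXc : Consistent X) (hXU : X ⊆ litset (P ∪ Q))
    (hYc : Consistent Y) (hYU : Y ⊆ litset (P ∪ Q)) :
    ∃ (k : ℕ) (E : Program), IsFlatExt P (litset (P ∪ Q)) k E ∧
      PStable E X ∧ PStable E Y := by
  have hPU : litset P ⊆ litset (P ∪ Q) := by
    intro l hl
    simp only [litset, Finset.mem_biUnion] at hl ⊢
    obtain ⟨wr, hwr, hl⟩ := hl
    exact ⟨wr, Finset.mem_union_left _ hwr, hl⟩
  exact main_ind P (litset (P ∪ Q)) hPU X Y hXc hXU hYc hYU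
    (min ((hardCount (E0 P (litset (P ∪ Q))) X : ℤ))
      ((hardCount (E0 P (litset (P ∪ Q))) Y : ℤ)))
    _ 0 (E0 P (litset (P ∪ Q))) IsFlatExt.zero rfl
    (by push_cast; omega) (by push_cast; omega)

end LPMLN
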